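/- Let C be a ℤ/2-linear subspace of (ℤ/2)^N in which every nonzero element has Hamming weight at least 3, and let Q_C be the simple graph on the quotient group (ℤ/2)^N / C in which cosets a and b are adjacent exactly when a ≠ b and b = a + ē_i for some i, where ē_i is the coset of the i-th standard basis vector. Then Q_C is bipartite (admits a proper 2-coloring of its vertices) if and only if every element of C has even Hamming weight. -/

import Mathlib

/-- The quotient graph `Q_C` of the hypercube `Q_N` by a linear binary code `C`:
vertices are cosets in `(ℤ/2)^N / C`, and cosets `a ≠ b` are adjacent exactly
when `b = a + ē_i` for some `i`, where `ē_i` is the coset of the `i`-th standard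
basis vector. -/
def codeQuotientGraph {N : ℕ} (C : Submodule (ZMod 2) (Fin N → ZMod 2)) :
    SimpleGraph ((Fin N → ZMod 2) ⧸ C) :=
  SimpleGraph.fromRel
    (fun a b => ∃ i : Fin N, b = a + Submodule.Quotient.mk (Pi.single i 1))

lemma zmod2_cases (x : ZMod 2) : x = 0 ∨ x = 1 := by revert x; decide

lemma sum_coords_eq {N : ℕ} (c : Fin N → ZMod 2) :
    (∑ i, c i) = (hammingNorm c : ZMod 2) := by
  rw [hammingNorm, Finset.card_eq_sum_ones, Nat.cast_sum]
  rw [← Finset.sum_filter_ne_zero Finset.univ]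
  apply Finset.sum_congr rfl
  intro i hi
  simp only [Finset.mem_filter] at hi
  rcases zmod2_cases (c i) with h | h
  · exact absurd h hi.2
  · simp [h]

lemma support_sum_eq {N : ℕ} (c : Fin N → ZMod 2) :
    (∑ k ∈ Finset.filter (fun k => c k ≠ 0) Finset.univ,
      (Pi.single k 1 : Fin N → ZMod 2)) = c := by
  funext j
  rw [Finset.sum_apply]
  simp only [Pi.single_apply]
  rw [Finset.sum_ite_eq (Finset.filter (fun k => c k ≠ 0) Finset.univ) j (fun _ => (1 : ZMod 2))]
  rcases zmod2_cases (c j) with h | h <;> simp [h]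

lemma hammingNorm_single' {N : ℕ} (i : Fin N) :
    hammingNorm (Pi.single i 1 : Fin N → ZMod 2) = 1 := by
  rw [hammingNorm]
  rw [show (Finset.filter (fun j => (Pi.single i 1 : Fin N → ZMod 2) j ≠ 0)
      Finset.univ) = {i} from ?_]
  · simp
  · ext j
    simp [Pi.single_apply]

/-- If every nonzero codeword of `C` has Hamming weight at least `3`, then `Q_C`
is bipartite if and only if `C` is an even code. -/
theorem codeQuotientGraph_bipartite_iff_even {N : ℕ}
    (C : Submodule (ZMod 2) (Fin N → ZMod 2))
    (hC : ∀ c ∈ C, c ≠ 0 → 3 ≤ hammingNorm c) :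
    (codeQuotientGraph C).Colorable 2 ↔ (∀ c ∈ C, Even (hammingNorm c)) := by
  constructor
  · intro hcol c hc
    have col : (codeQuotientGraph C).Coloring (ZMod 2) :=
      hcol.toColoring (by simp [ZMod.card])
    have hsingle : ∀ i : Fin N, (Pi.single i 1 : Fin N → ZMod 2) ∉ C := by
      intro i hi
      have hne : (Pi.single i 1 : Fin N → ZMod 2) ≠ 0 := by
        intro h
        have := congrFun h i
        simp at this
      have h3 := hC _ hi hne
      rw [hammingNorm_single'] at h3
      omega
    have hne2 : ∀ a b : ZMod 2, a ≠ b → b = a + 1 := by decide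
    have step : ∀ (x : Fin N → ZMod 2) (i : Fin N),
        col (Submodule.Quotient.mk (x + Pi.single i 1)) =
          col (Submodule.Quotient.mk x) + 1 := by
      intro x i
      have hadj : (codeQuotientGraph C).Adj (Submodule.Quotient.mk x)
          (Submodule.Quotient.mk (x + Pi.single i 1)) := by
        refine ⟨?_, Or.inl ⟨i, by rw [Submodule.Quotient.mk_add]⟩⟩
        intro h
        rw [Submodule.Quotient.eq] at h
        have hx : x - (x + Pi.single i 1) = -(Pi.single i 1 : Fin N → ZMod 2) := by
          abel
        rw [hx, neg_mem_iff] at h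
        exact hsingle i h
      exact hne2 _ _ (col.valid hadj)
    have main : ∀ s : Finset (Fin N), ∀ x : Fin N → ZMod 2,
        col (Submodule.Quotient.mk (x + ∑ i ∈ s, (Pi.single i 1 : Fin N → ZMod 2))) =
          col (Submodule.Quotient.mk x) + (s.card : ZMod 2) := by
      intro s
      induction s using Finset.induction_on with
      | empty => intro x; simp
      | insert _ _ hi =>
        rename_i i s ih
        intro x
        rw [Finset.sum_insert hi, ← add_assoc, ih, step,
          Finset.card_insert_of_notMem hi]
        push_cast
        ring
    have hkey := main (Finset.filter (fun k => c k ≠ 0) Finset.univ) 0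
    rw [zero_add, support_sum_eq] at hkey
    have hmk : (Submodule.Quotient.mk c : (Fin N → ZMod 2) ⧸ C) =
        Submodule.Quotient.mk 0 := by
      rw [Submodule.Quotient.eq]
      simpa using hc
    rw [hmk, left_eq_add] at hkey
    have hcard : (Finset.filter (fun k => c k ≠ 0) Finset.univ).card =
        hammingNorm c := rfl
    rw [hcard] at hkey
    have : (2 : ℕ) ∣ hammingNorm c := by
      rwa [ZMod.natCast_eq_zero_iff] at hkey
    exact (even_iff_two_dvd).2 this
  · intro heven
    let f : (Fin N → ZMod 2) →ₗ[ZMod 2] ZMod 2 :=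
      { toFun := fun x => ∑ i, x i
        map_add' := by intro x y; simp [Finset.sum_add_distrib]
        map_smul' := by intro r x; simp [Finset.mul_sum] }
    have hker : C ≤ LinearMap.ker f := by
      intro x hx
      simp only [LinearMap.mem_ker]
      show (∑ i, x i) = 0
      rw [sum_coords_eq, ZMod.natCast_eq_zero_iff]
      exact (even_iff_two_dvd).1 (heven x hx)
    let fbar := C.liftQ f hker
    have hstep : ∀ (a : (Fin N → ZMod 2) ⧸ C) (i : Fin N),
        fbar (a + Submodule.Quotient.mk (Pi.single i 1)) = fbar a + 1 := by
      intro a i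
      rw [map_add]
      congr 1
      rw [Submodule.liftQ_apply]
      show (∑ j, (Pi.single i 1 : Fin N → ZMod 2) j) = 1
      exact Fintype.sum_pi_single' i 1
    have colg : (codeQuotientGraph C).Coloring (ZMod 2) := by
      refine SimpleGraph.Coloring.mk (fun a => fbar a) ?_
      intro a b hab
      obtain ⟨hne, h | h⟩ := hab
      · obtain ⟨i, rfl⟩ := h
        show fbar a ≠ fbar (a + Submodule.Quotient.mk (Pi.single i 1))
        rw [hstep]
        intro h'
        exact one_ne_zero (left_eq_add.mp h')
      · obtain ⟨i, rfl⟩ := h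
        show fbar (b + Submodule.Quotient.mk (Pi.single i 1)) ≠ fbar b
        rw [hstep]
        intro h'
        exact one_ne_zero (left_eq_add.mp h'.symm)
    have := colg.colorable
    rwa [ZMod.card] at this
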